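/- arXiv:1301.6935 — 7 statements merged into one kernel-verified Lean document; each statement's English description precedes it below -/
import Mathlib

section
/- Let k > 0 and let C : ℝ × ℝ → ℝ be a function such that C(α, β)/(α − β) tends to −1/k as (α, β) tends to (1, 1) within the set {(α, β) | α ≠ β}. Then for every n and every probability vector (p₁, …, pₙ) with all pᵢ > 0, the function (α, β) ↦ Σᵢ (pᵢ^α − pᵢ^β)/C(α, β) tends to −k·Σᵢ pᵢ ln pᵢ as (α, β) tends to (1, 1) within the set {(α, β) | α ≠ β}. -/
open Filter Real

lemma slope2 (f : ℝ → ℝ) (f' x : ℝ) (h : HasStrictDerivAt f f' x) :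
    Filter.Tendsto (fun q : ℝ × ℝ => (f q.1 - f q.2) / (q.1 - q.2))
      (nhdsWithin (x, x) {q : ℝ × ℝ | q.1 ≠ q.2}) (nhds f') := by
  rw [Metric.tendsto_nhds]
  intro ε hε
  have hh := h.isLittleO.def (by linarith : (0:ℝ) < ε/2)
  filter_upwards [nhdsWithin_le_nhds hh, self_mem_nhdsWithin] with q hq hne
  have hd : q.1 - q.2 ≠ 0 := sub_ne_zero.2 hne
  rw [Real.dist_eq]
  have heq : (f q.1 - f q.2) / (q.1 - q.2) - f' =
      (f q.1 - f q.2 - (q.1 - q.2) * f') / (q.1 - q.2) := by field_simp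
  rw [heq, abs_div]
  have h1 : |f q.1 - f q.2 - (q.1 - q.2) * f'| ≤ ε/2 * |q.1 - q.2| := by
    simpa [Real.norm_eq_abs, smul_eq_mul] using hq
  have h2 : (0:ℝ) < |q.1 - q.2| := abs_pos.2 hd
  calc |f q.1 - f q.2 - (q.1 - q.2) * f'| / |q.1 - q.2|
      ≤ (ε/2 * |q.1 - q.2|) / |q.1 - q.2| := by
        exact div_le_div_of_nonneg_right h1 h2.le
    _ = ε/2 := by field_simp
    _ < ε := by linarith

theorem stmt1 (k : ℝ) (hk : 0 < k) (C : ℝ × ℝ → ℝ)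
    (hC : Filter.Tendsto (fun q : ℝ × ℝ => C q / (q.1 - q.2))
      (nhdsWithin ((1 : ℝ), (1 : ℝ)) {q : ℝ × ℝ | q.1 ≠ q.2}) (nhds (-1 / k)))
    (n : ℕ) (p : Fin n → ℝ) (hp : ∀ i, 0 < p i) (hsum : ∑ i, p i = 1) :
    Filter.Tendsto (fun q : ℝ × ℝ => ∑ i, (p i ^ q.1 - p i ^ q.2) / C q)
      (nhdsWithin ((1 : ℝ), (1 : ℝ)) {q : ℝ × ℝ | q.1 ≠ q.2})
      (nhds (-k * ∑ i, p i * Real.log (p i))) := by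
  have hinv : Filter.Tendsto (fun q : ℝ × ℝ => (C q / (q.1 - q.2))⁻¹)
      (nhdsWithin ((1 : ℝ), (1 : ℝ)) {q : ℝ × ℝ | q.1 ≠ q.2}) (nhds (-k)) := by
    have hne : (-1 / k : ℝ) ≠ 0 := by
      simp [div_eq_zero_iff]; positivity
    have := hC.inv₀ hne
    convert this using 2
    field_simp
  have key : ∀ i : Fin n, Filter.Tendsto (fun q : ℝ × ℝ => (p i ^ q.1 - p i ^ q.2) / C q)
      (nhdsWithin ((1 : ℝ), (1 : ℝ)) {q : ℝ × ℝ | q.1 ≠ q.2})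
      (nhds (p i * Real.log (p i) * (-k))) := by
    intro i
    have hs : HasStrictDerivAt (fun x : ℝ => (p i) ^ x) (p i * Real.log (p i)) 1 := by
      have := Real.hasStrictDerivAt_const_rpow (hp i) 1
      simpa [Real.rpow_one] using this
    have hslope := slope2 (fun x : ℝ => (p i) ^ x) _ 1 hs
    have := hslope.mul hinv
    apply this.congr'
    filter_upwards [self_mem_nhdsWithin] with q hq
    have hd : q.1 - q.2 ≠ 0 := sub_ne_zero.2 hq
    rcases eq_or_ne (C q) 0 with hc | hc
    · simp [hc]
    · field_simp
  have := tendsto_finset_sum Finset.univ (fun i _ => key i)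
  convert this using 2
  rw [Finset.mul_sum]
  congr 1; ext i; ring
end

section
/- Let k > 0 and let C be the counterexample-b function. Then there is no real number L such that C(α, β)/(α − β) tends to L as (α, β) tends to (1, 1) within the set {(α, β) | α ≠ β}. -/
open Filter

/-- The counterexample-b function from the paper. -/
noncomputable def Cb (k : ℝ) : ℝ × ℝ → ℝ := fun q =>
  if q = (1, 1) then 0
  else ((q.1 - q.2) / (2 * k)) *
    ((q.1 - 1) * (q.2 - 1) / ((q.1 - 1) ^ 2 + (q.2 - 1) ^ 2) - 1)

theorem stmt10 (k : ℝ) (hk : 0 < k) :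
    ¬ ∃ L : ℝ, Filter.Tendsto (fun q : ℝ × ℝ => Cb k q / (q.1 - q.2))
      (nhdsWithin ((1 : ℝ), (1 : ℝ)) {q : ℝ × ℝ | q.1 ≠ q.2}) (nhds L) := by
  rintro ⟨L, hL⟩
  have hk' : (k : ℝ) ≠ 0 := ne_of_gt hk
  set f : ℝ × ℝ → ℝ := fun q => Cb k q / (q.1 - q.2) with hf
  have hpos : ∀ n : ℕ, (0 : ℝ) < 1 / (n + 1) := by intro n; positivity
  have hx0 : Tendsto (fun n : ℕ => (1 : ℝ) / (n + 1)) atTop (nhds 0) :=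
    tendsto_one_div_add_atTop_nhds_zero_nat
  have hA : ∀ x : ℝ, x ≠ 0 → f (1 + x, 1) = -1 / (2 * k) := by
    intro x hx
    have hne : ((1 + x, (1 : ℝ))) ≠ ((1 : ℝ), (1 : ℝ)) := by
      intro h
      have := congrArg Prod.fst h
      simp at this
      exact hx this
    simp only [hf, Cb, if_neg hne]
    field_simp
    rw [div_eq_iff (by simpa using hx)]
    ring
  have hB : ∀ x : ℝ, x ≠ 0 → f (1 + x, 1 - x) = -3 / (4 * k) := by
    intro x hx
    have hne : ((1 + x, 1 - x)) ≠ ((1 : ℝ), (1 : ℝ)) := by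
      intro h
      have := congrArg Prod.fst h
      simp at this
      exact hx this
    simp only [hf, Cb, if_neg hne]
    have hd : ((1 : ℝ) + x - 1) ^ 2 + (1 - x - 1) ^ 2 = 2 * x ^ 2 := by ring
    rw [hd]
    have hx2 : (2 : ℝ) * x ^ 2 ≠ 0 := by positivity
    field_simp
    have hden : (2 * k * (2 * x ^ 2) * (x + x) : ℝ) ≠ 0 :=
      mul_ne_zero (mul_ne_zero (by positivity) hx2) (by intro h; apply hx; linarith)
    rw [div_eq_iff (by intro h; apply hx; linarith)]
    ring
  have ha : Tendsto (fun n : ℕ => ((1 + 1 / (n + 1), 1) : ℝ × ℝ)) atTop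
      (nhdsWithin ((1 : ℝ), (1 : ℝ)) {q : ℝ × ℝ | q.1 ≠ q.2}) := by
    rw [tendsto_nhdsWithin_iff]
    constructor
    · have h1 : Tendsto (fun n : ℕ => (1 : ℝ) + 1 / (n + 1)) atTop (nhds 1) := by
        simpa using tendsto_const_nhds.add hx0
      exact h1.prodMk_nhds tendsto_const_nhds
    · filter_upwards with n
      have := hpos n
      intro h
      nlinarith
  have hb : Tendsto (fun n : ℕ => ((1 + 1 / (n + 1), 1 - 1 / (n + 1)) : ℝ × ℝ)) atTop
      (nhdsWithin ((1 : ℝ), (1 : ℝ)) {q : ℝ × ℝ | q.1 ≠ q.2}) := by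
    rw [tendsto_nhdsWithin_iff]
    constructor
    · have h1 : Tendsto (fun n : ℕ => (1 : ℝ) + 1 / (n + 1)) atTop (nhds 1) := by
        simpa using tendsto_const_nhds.add hx0
      have h2 : Tendsto (fun n : ℕ => (1 : ℝ) - 1 / (n + 1)) atTop (nhds 1) := by
        simpa using tendsto_const_nhds.sub hx0
      exact h1.prodMk_nhds h2
    · filter_upwards with n
      have := hpos n
      intro h
      nlinarith
  have hca : Tendsto (fun _ : ℕ => (-1 / (2 * k) : ℝ)) atTop (nhds L) := by
    have h := hL.comp ha
    have he : (f ∘ fun n : ℕ => ((1 + 1 / (n + 1), 1) : ℝ × ℝ)) =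
        fun _ : ℕ => (-1 / (2 * k) : ℝ) :=
      funext fun n => hA _ (ne_of_gt (hpos n))
    rwa [he] at h
  have hcb : Tendsto (fun _ : ℕ => (-3 / (4 * k) : ℝ)) atTop (nhds L) := by
    have h := hL.comp hb
    have he : (f ∘ fun n : ℕ => ((1 + 1 / (n + 1), 1 - 1 / (n + 1)) : ℝ × ℝ)) =
        fun _ : ℕ => (-3 / (4 * k) : ℝ) :=
      funext fun n => hB _ (ne_of_gt (hpos n))
    rwa [he] at h
  have h1 : L = -1 / (2 * k) := tendsto_nhds_unique hca tendsto_const_nhds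
  have h2 : L = -3 / (4 * k) := tendsto_nhds_unique hcb tendsto_const_nhds
  rw [h1] at h2
  field_simp at h2
  linarith
end

section
/- Let k > 0, let C be the counterexample-b function, and let (p₁, …, pₙ) be a probability vector with all pᵢ > 0 and Σᵢ pᵢ ln pᵢ ≠ 0. Then there is no real number L such that the function (α, β) ↦ Σᵢ (pᵢ^α − pᵢ^β)/C(α, β) tends to L as (α, β) tends to (1, 1) within the set {(α, β) | α ≠ β}. -/
open Filter Real

private lemma slope_key {p : ℝ} (hp : 0 < p) (c : ℝ) :
    Filter.Tendsto (fun t : ℝ => (p ^ (1 + c * t) - p) / t) (nhdsWithin 0 {(0:ℝ)}ᶜ)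
      (nhds (c * (p * Real.log p))) := by
  have h0 : HasDerivAt (fun x : ℝ => p ^ x) (p ^ (1:ℝ) * Real.log p) 1 :=
    (Real.hasStrictDerivAt_const_rpow hp 1).hasDerivAt
  have h2 : HasDerivAt (fun t : ℝ => 1 + c * t) c 0 := by
    simpa using ((hasDerivAt_id (0:ℝ)).const_mul c).const_add 1
  have h0' : HasDerivAt (fun x : ℝ => p ^ x) (p ^ (1:ℝ) * Real.log p) (1 + c * 0) := by
    simpa using h0
  have h1 : HasDerivAt (fun t : ℝ => p ^ (1 + c * t)) (c * (p * Real.log p)) 0 := by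
    have := h0'.comp 0 h2
    simpa [Real.rpow_one, mul_comm, mul_assoc, mul_left_comm, Function.comp_def] using this
  have := hasDerivAt_iff_tendsto_slope.mp h1
  simpa [slope_fun_def, Real.rpow_one, div_eq_inv_mul] using this

theorem stmt11 (k : ℝ) (hk : 0 < k) (n : ℕ) (p : Fin n → ℝ)
    (hp : ∀ i, 0 < p i) (hsum : ∑ i, p i = 1)
    (hlog : ∑ i, p i * Real.log (p i) ≠ 0) :
    ¬ ∃ L : ℝ, Filter.Tendsto (fun q : ℝ × ℝ => ∑ i, (p i ^ q.1 - p i ^ q.2) / Cb k q)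
      (nhdsWithin ((1 : ℝ), (1 : ℝ)) {q : ℝ × ℝ | q.1 ≠ q.2}) (nhds L) := by
  rintro ⟨L, hL⟩
  set S := ∑ i, p i * Real.log (p i) with hS
  set f : ℝ × ℝ → ℝ := fun q => ∑ i, (p i ^ q.1 - p i ^ q.2) / Cb k q with hf
  have hk' : k ≠ 0 := hk.ne'
  -- path 1 : t ↦ (1+t, 1)
  have hmap1 : Filter.Tendsto (fun t : ℝ => ((1 + t, 1) : ℝ × ℝ)) (nhdsWithin 0 {(0:ℝ)}ᶜ)
      (nhdsWithin ((1:ℝ), (1:ℝ)) {q : ℝ × ℝ | q.1 ≠ q.2}) := by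
    apply tendsto_nhdsWithin_of_tendsto_nhds_of_eventually_within
    · exact ((by continuity : Continuous fun t : ℝ => ((1 + t, 1) : ℝ × ℝ)).tendsto' 0 (1, 1)
        (by norm_num)).mono_left nhdsWithin_le_nhds
    · filter_upwards [self_mem_nhdsWithin] with t ht
      intro h
      simp at h
      exact ht (Set.mem_singleton_iff.mpr h)
  have hmap2 : Filter.Tendsto (fun t : ℝ => ((1 + t, 1 + 2 * t) : ℝ × ℝ)) (nhdsWithin 0 {(0:ℝ)}ᶜ)
      (nhdsWithin ((1:ℝ), (1:ℝ)) {q : ℝ × ℝ | q.1 ≠ q.2}) := by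
    apply tendsto_nhdsWithin_of_tendsto_nhds_of_eventually_within
    · exact ((by continuity : Continuous fun t : ℝ => ((1 + t, 1 + 2 * t) : ℝ × ℝ)).tendsto' 0 (1, 1)
        (by norm_num)).mono_left nhdsWithin_le_nhds
    · filter_upwards [self_mem_nhdsWithin] with t ht
      intro h
      simp at h
      exact ht (Set.mem_singleton_iff.mpr (by linarith))
  -- limit of difference quotient sums
  have hA : Filter.Tendsto (fun t : ℝ => ∑ i, (p i ^ (1 + t) - p i) / t) (nhdsWithin 0 {(0:ℝ)}ᶜ)
      (nhds S) := by
    rw [hS]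
    apply tendsto_finset_sum
    intro i _
    simpa using slope_key (hp i) 1
  have hB : Filter.Tendsto (fun t : ℝ => ∑ i, (p i ^ (1 + 2 * t) - p i) / t) (nhdsWithin 0 {(0:ℝ)}ᶜ)
      (nhds (2 * S)) := by
    rw [hS, Finset.mul_sum]
    exact tendsto_finset_sum _ fun i _ => slope_key (hp i) 2
  -- along path 1
  have hL1 : Filter.Tendsto (fun t : ℝ => f (1 + t, 1)) (nhdsWithin 0 {(0:ℝ)}ᶜ) (nhds L) :=
    hL.comp hmap1
  have heq1 : ∀ t : ℝ, t ≠ 0 → f (1 + t, 1) = -(2 * k) * ∑ i, (p i ^ (1 + t) - p i) / t := by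
    intro t ht
    have hC : Cb k (1 + t, 1) = -t / (2 * k) := by
      rw [Cb, if_neg (by simp [Prod.ext_iff]; intro h; exact absurd (by linarith) ht)]
      simp only
      field_simp
      ring
    rw [hf, Finset.mul_sum]
    simp only [hC, Real.rpow_one]
    refine Finset.sum_congr rfl fun i _ => ?_
    rw [div_div_eq_mul_div]
    ring
  have hlim1 : Filter.Tendsto (fun t : ℝ => f (1 + t, 1)) (nhdsWithin 0 {(0:ℝ)}ᶜ)
      (nhds (-(2 * k) * S)) := by
    refine (hA.const_mul (-(2 * k))).congr' ?_
    filter_upwards [self_mem_nhdsWithin] with t ht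
    exact (heq1 t ht).symm
  have e1 : L = -(2 * k) * S := tendsto_nhds_unique hL1 hlim1
  -- along path 2
  have hL2 : Filter.Tendsto (fun t : ℝ => f (1 + t, 1 + 2 * t)) (nhdsWithin 0 {(0:ℝ)}ᶜ) (nhds L) :=
    hL.comp hmap2
  have heq2 : ∀ t : ℝ, t ≠ 0 → f (1 + t, 1 + 2 * t) =
      (10 * k / 3) * ∑ i, ((p i ^ (1 + t) - p i) / t - (p i ^ (1 + 2 * t) - p i) / t) := by
    intro t ht
    have hC : Cb k (1 + t, 1 + 2 * t) = 3 * t / (10 * k) := by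
      rw [Cb, if_neg (by simp [Prod.ext_iff]; intro h; exact absurd (by linarith) ht)]
      simp only
      have h5 : (1 + t - 1) ^ 2 + (1 + 2 * t - 1) ^ 2 = 5 * t ^ 2 := by ring
      rw [h5]
      have ht2 : t ^ 2 ≠ 0 := pow_ne_zero 2 ht
      field_simp
      ring
    rw [hf, Finset.mul_sum]
    simp only [hC]
    refine Finset.sum_congr rfl fun i _ => ?_
    rw [div_sub_div _ _ ht ht, div_div_eq_mul_div, ← mul_div_assoc,
      div_eq_div_iff (mul_ne_zero three_ne_zero ht) (mul_ne_zero ht ht)]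
    ring
  have hlim2 : Filter.Tendsto (fun t : ℝ => f (1 + t, 1 + 2 * t)) (nhdsWithin 0 {(0:ℝ)}ᶜ)
      (nhds (-(10 * k / 3) * S)) := by
    have hsub : Filter.Tendsto
        (fun t : ℝ => ∑ i, ((p i ^ (1 + t) - p i) / t - (p i ^ (1 + 2 * t) - p i) / t))
        (nhdsWithin 0 {(0:ℝ)}ᶜ) (nhds (S - 2 * S)) := by
      have := hA.sub hB
      simpa [Finset.sum_sub_distrib] using this
    have : Filter.Tendsto
        (fun t : ℝ => (10 * k / 3) *
          ∑ i, ((p i ^ (1 + t) - p i) / t - (p i ^ (1 + 2 * t) - p i) / t))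
        (nhdsWithin 0 {(0:ℝ)}ᶜ) (nhds ((10 * k / 3) * (S - 2 * S))) := hsub.const_mul _
    have harith : (10 * k / 3) * (S - 2 * S) = -(10 * k / 3) * S := by ring
    rw [harith] at this
    refine this.congr' ?_
    filter_upwards [self_mem_nhdsWithin] with t ht
    exact (heq2 t ht).symm
  have e2 : L = -(10 * k / 3) * S := tendsto_nhds_unique hL2 hlim2
  have hks : k * S = 0 := by
    have h := e1.symm.trans e2
    nlinarith [h]
  rcases mul_eq_zero.mp hks with h | h
  · exact hk' h
  · exact hlog h
end

section
/- Let α, β be real numbers, let c ≠ 0, and define s(x) = (x^α − x^β)/c for x ≥ 0. Let n ∈ ℕ, let m : Fin n → ℕ, and let p : (i : Fin n) → Fin (m i) → ℝ satisfy p i j ≥ 0 for all i, j. Set pᵢ = Σⱼ p i j and assume pᵢ > 0 for all i. Then Σᵢ Σⱼ s(p i j) = Σᵢ pᵢ^α · (Σⱼ s(p i j / pᵢ)) + Σᵢ s(pᵢ) · (Σⱼ (p i j / pᵢ)^β). (Two-parameter generalized Shannon additivity, axiom [TGSK3].) -/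
open Real

theorem stmt12 (α β c : ℝ) (hc : c ≠ 0) (n : ℕ) (m : Fin n → ℕ)
    (p : (i : Fin n) → Fin (m i) → ℝ) (hp : ∀ i j, 0 < p i j)
    (hpos : ∀ i, 0 < ∑ j, p i j) :
    ∑ i, ∑ j, ((p i j) ^ α - (p i j) ^ β) / c =
      (∑ i, (∑ j, p i j) ^ α *
        ∑ j, ((p i j / ∑ j', p i j') ^ α - (p i j / ∑ j', p i j') ^ β) / c) +
      ∑ i, (((∑ j, p i j) ^ α - (∑ j, p i j) ^ β) / c) *
        ∑ j, (p i j / ∑ j', p i j') ^ β := by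
  rw [← Finset.sum_add_distrib]
  refine Finset.sum_congr rfl fun i _ => ?_
  set P := ∑ j, p i j with hP
  have hPpos : 0 < P := hpos i
  have hPa : 0 < P ^ α := rpow_pos_of_pos hPpos α
  have hPb : 0 < P ^ β := rpow_pos_of_pos hPpos β
  have hdiv : ∀ (γ : ℝ) (j : Fin (m i)), (p i j / P) ^ γ = p i j ^ γ / P ^ γ :=
    fun γ j => div_rpow (hp i j).le hPpos.le γ
  simp only [hdiv, Finset.mul_sum, Finset.sum_div, ← Finset.sum_add_distrib,
    ← Finset.sum_sub_distrib]
  refine Finset.sum_congr rfl fun j _ => ?_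
  field_simp
  ring
end

section
/- Let α ≥ 1 and 0 ≤ β ≤ 1 with (α, β) ≠ (1, 1), let c < 0, and let (p₁, …, pₙ) be a probability vector. Then Σᵢ (pᵢ^α − pᵢ^β)/c ≤ n · ((1/n)^α − (1/n)^β)/c; that is, the entropy S(p₁, …, pₙ) = Σᵢ (pᵢ^α − pᵢ^β)/c is maximized by the uniform distribution (axiom [TGSK2]). -/
open Real

theorem stmt13 (α β c : ℝ) (hα : 1 ≤ α) (hβ0 : 0 ≤ β) (hβ1 : β ≤ 1)
    (hne : (α, β) ≠ ((1 : ℝ), (1 : ℝ))) (hc : c < 0)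
    (n : ℕ) (p : Fin n → ℝ) (hp : ∀ i, 0 ≤ p i) (hsum : ∑ i, p i = 1) :
    ∑ i, (p i ^ α - p i ^ β) / c ≤
      (n : ℝ) * ((((1 : ℝ) / n) ^ α - ((1 : ℝ) / n) ^ β) / c) := by
  have hn : 0 < n := by
    by_contra h
    push_neg at h
    interval_cases n
    simp at hsum
  have hn' : (0 : ℝ) < n := by exact_mod_cast hn
  -- f is concave on [0, ∞)
  have hconv : ConvexOn ℝ (Set.Ici 0) fun x : ℝ ↦ x ^ α - x ^ β :=
    (convexOn_rpow hα).sub (Real.concaveOn_rpow hβ0 hβ1)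
  have hconc : ConcaveOn ℝ (Set.Ici 0) fun x : ℝ ↦ (x ^ α - x ^ β) / c := by
    have := hconv.neg.smul (c := -1 / c) (by rw [neg_div]; exact neg_nonneg.2 (div_nonpos_of_nonneg_of_nonpos zero_le_one hc.le))
    convert this using 2 with x
    all_goals first | rfl | (simp only [Pi.neg_apply, smul_eq_mul]; ring)
  have key := hconc.le_map_sum (t := Finset.univ) (w := fun _ : Fin n => 1 / (n:ℝ))
    (p := p) (fun i _ => by positivity)
    (by simp [Finset.sum_const, mul_comm]; field_simp)
    (fun i _ => hp i)
  have hmean : ∑ i, (1 / (n:ℝ)) • p i = 1 / n := by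
    rw [← Finset.smul_sum, hsum, smul_eq_mul, mul_one]
  rw [hmean] at key
  simp only [smul_eq_mul] at key
  calc ∑ i, (p i ^ α - p i ^ β) / c
      = (n : ℝ) * ∑ i, (1 / (n:ℝ)) * ((p i ^ α - p i ^ β) / c) := by
        rw [Finset.mul_sum]
        refine Finset.sum_congr rfl fun i _ => ?_
        rw [← mul_assoc, mul_one_div, div_self (ne_of_gt hn'), one_mul]
    _ ≤ (n : ℝ) * ((((1 : ℝ) / n) ^ α - ((1 : ℝ) / n) ^ β) / c) := by
        exact mul_le_mul_of_nonneg_left key hn'.le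
end

section
/- Let A : ℝ × ℝ → ℝ be such that A(κ₁, κ₂)·(κ₁ − κ₂) tends to 1 as (κ₁, κ₂) tends to (0, 0) within the set {(κ₁, κ₂) | κ₁ ≠ κ₂}. Then for every x > 0, the function (κ₁, κ₂) ↦ A(κ₁, κ₂)·(x^{κ₁} − x^{κ₂}) tends to ln x as (κ₁, κ₂) tends to (0, 0) within the set {(κ₁, κ₂) | κ₁ ≠ κ₂}. -/
open Filter Real

theorem stmt15 (A : ℝ × ℝ → ℝ)
    (hA : Filter.Tendsto (fun q : ℝ × ℝ => A q * (q.1 - q.2))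
      (nhdsWithin ((0 : ℝ), (0 : ℝ)) {q : ℝ × ℝ | q.1 ≠ q.2}) (nhds 1))
    (x : ℝ) (hx : 0 < x) :
    Filter.Tendsto (fun q : ℝ × ℝ => A q * (x ^ q.1 - x ^ q.2))
      (nhdsWithin ((0 : ℝ), (0 : ℝ)) {q : ℝ × ℝ | q.1 ≠ q.2})
      (nhds (Real.log x)) := by
  have hderiv : HasStrictDerivAt (fun t : ℝ => x ^ t) (Real.log x) 0 := by
    simpa using Real.hasStrictDerivAt_const_rpow hx 0
  have hlo := hderiv.isLittleO
  have hdiv : Filter.Tendsto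
      (fun q : ℝ × ℝ => (x ^ q.1 - x ^ q.2 - (q.1 - q.2) * Real.log x) / (q.1 - q.2))
      (nhds ((0 : ℝ), (0 : ℝ))) (nhds 0) := by
    have := hlo.tendsto_div_nhds_zero
    simpa [smul_eq_mul, mul_comm] using this
  have hslope : Filter.Tendsto
      (fun q : ℝ × ℝ => (x ^ q.1 - x ^ q.2) / (q.1 - q.2))
      (nhdsWithin ((0 : ℝ), (0 : ℝ)) {q : ℝ × ℝ | q.1 ≠ q.2}) (nhds (Real.log x)) := by
    have h0 : Filter.Tendsto
        (fun q : ℝ × ℝ => (x ^ q.1 - x ^ q.2 - (q.1 - q.2) * Real.log x) / (q.1 - q.2) + Real.log x)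
        (nhdsWithin ((0 : ℝ), (0 : ℝ)) {q : ℝ × ℝ | q.1 ≠ q.2}) (nhds (0 + Real.log x)) :=
      ((hdiv.mono_left nhdsWithin_le_nhds).add tendsto_const_nhds)
    rw [zero_add] at h0
    refine h0.congr' ?_
    filter_upwards [self_mem_nhdsWithin] with q hq
    have hne : q.1 - q.2 ≠ 0 := sub_ne_zero.mpr hq
    field_simp
    ring
  have key : Filter.Tendsto
      (fun q : ℝ × ℝ => (A q * (q.1 - q.2)) * ((x ^ q.1 - x ^ q.2) / (q.1 - q.2)))
      (nhdsWithin ((0 : ℝ), (0 : ℝ)) {q : ℝ × ℝ | q.1 ≠ q.2}) (nhds (1 * Real.log x)) :=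
    hA.mul hslope
  rw [one_mul] at key
  refine key.congr' ?_
  filter_upwards [self_mem_nhdsWithin] with q hq
  have hne : q.1 - q.2 ≠ 0 := sub_ne_zero.mpr hq
  field_simp
end

section
/- Let A : ℝ × ℝ → ℝ and let x > 0 with x ≠ 1. If the function (κ₁, κ₂) ↦ A(κ₁, κ₂)·(x^{κ₁} − x^{κ₂}) tends to ln x as (κ₁, κ₂) tends to (0, 0) within the set {(κ₁, κ₂) | κ₁ ≠ κ₂}, then A(κ₁, κ₂)·(κ₁ − κ₂) tends to 1 as (κ₁, κ₂) tends to (0, 0) within the same set. -/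
open Filter Real

theorem stmt16 (A : ℝ × ℝ → ℝ) (x : ℝ) (hx : 0 < x) (hx1 : x ≠ 1)
    (hA : Filter.Tendsto (fun q : ℝ × ℝ => A q * (x ^ q.1 - x ^ q.2))
      (nhdsWithin ((0 : ℝ), (0 : ℝ)) {q : ℝ × ℝ | q.1 ≠ q.2})
      (nhds (Real.log x))) :
    Filter.Tendsto (fun q : ℝ × ℝ => A q * (q.1 - q.2))
      (nhdsWithin ((0 : ℝ), (0 : ℝ)) {q : ℝ × ℝ | q.1 ≠ q.2}) (nhds 1) := by
  set L := Real.log x with hLdef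
  have hL : L ≠ 0 := Real.log_ne_zero_of_pos_of_ne_one hx hx1
  -- slope of t ↦ exp (t * L) at 0
  have hderiv : HasDerivAt (fun t : ℝ => Real.exp (t * L)) L 0 := by
    have h1 : HasDerivAt (fun t : ℝ => t * L) L 0 := by
      simpa using (hasDerivAt_id (0 : ℝ)).mul_const L
    have h2 := (Real.hasDerivAt_exp ((0 : ℝ) * L)).comp 0 h1
    have h3 : Real.exp ((0 : ℝ) * L) * L = L := by simp
    rw [h3] at h2
    exact h2
  have hslope : Tendsto (fun t : ℝ => (Real.exp (t * L) - 1) / t)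
      (nhdsWithin 0 {0}ᶜ) (nhds L) := by
    have := hasDerivAt_iff_tendsto_slope.mp hderiv
    refine this.congr' ?_
    filter_upwards [self_mem_nhdsWithin] with t ht
    simp [slope_def_field, div_eq_div_iff]
  -- the map q ↦ q.1 - q.2 into 𝓝[≠] 0
  have hsub : Tendsto (fun q : ℝ × ℝ => q.1 - q.2)
      (nhdsWithin ((0 : ℝ), (0 : ℝ)) {q : ℝ × ℝ | q.1 ≠ q.2})
      (nhdsWithin 0 {0}ᶜ) := by
    apply tendsto_nhdsWithin_of_tendsto_nhds_of_eventually_within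
    · have : Tendsto (fun q : ℝ × ℝ => q.1 - q.2) (nhds ((0 : ℝ), (0 : ℝ))) (nhds 0) := by
        have := (continuous_fst.sub continuous_snd).tendsto ((0 : ℝ), (0 : ℝ))
        convert this using 2 <;> simp
      exact this.mono_left nhdsWithin_le_nhds
    · filter_upwards [self_mem_nhdsWithin] with q hq
      simpa [sub_eq_zero] using hq
  have hsnd : Tendsto (fun q : ℝ × ℝ => Real.exp (q.2 * L))
      (nhdsWithin ((0 : ℝ), (0 : ℝ)) {q : ℝ × ℝ | q.1 ≠ q.2}) (nhds 1) := by
    have : Tendsto (fun q : ℝ × ℝ => Real.exp (q.2 * L)) (nhds ((0 : ℝ), (0 : ℝ)))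
        (nhds (Real.exp (0 * L))) :=
      (Real.continuous_exp.comp (continuous_snd.mul continuous_const)).tendsto _
    simpa using this.mono_left nhdsWithin_le_nhds
  have hg : Tendsto (fun q : ℝ × ℝ => (x ^ q.1 - x ^ q.2) / (q.1 - q.2))
      (nhdsWithin ((0 : ℝ), (0 : ℝ)) {q : ℝ × ℝ | q.1 ≠ q.2}) (nhds L) := by
    have h := hsnd.mul (hslope.comp hsub)
    rw [one_mul] at h
    refine h.congr' ?_
    filter_upwards [self_mem_nhdsWithin] with q hq
    have hxq : ∀ y : ℝ, x ^ y = Real.exp (y * L) := by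
      intro y
      rw [Real.rpow_def_of_pos hx, mul_comm]
    rw [Function.comp, hxq q.1, hxq q.2,
      show q.1 * L = q.2 * L + (q.1 - q.2) * L by ring, Real.exp_add]
    ring
  have hfinal := hA.div hg hL
  have hquot : Real.log x / L = 1 := div_self hL
  rw [hquot] at hfinal
  refine hfinal.congr' ?_
  filter_upwards [self_mem_nhdsWithin] with q hq
  have hd : q.1 - q.2 ≠ 0 := sub_ne_zero.mpr hq
  have hD : x ^ q.1 - x ^ q.2 ≠ 0 := by
    rw [sub_ne_zero]
    intro hEq
    rw [Real.rpow_def_of_pos hx, Real.rpow_def_of_pos hx] at hEq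
    exact hq (mul_left_cancel₀ hL (Real.exp_injective hEq))
  rw [Pi.div_apply]
  field_simp
end
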